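/- Let G be a groupoid and σ ∈ G. Define Σ_σ = {σ, σ⁻¹} ∪ (G₀ \ {d(σ), r(σ)}) if d(σ) ≠ r(σ), and Σ_σ = {σ} ∪ (G₀ \ {d(σ)}) if d(σ) = r(σ). Then Σ_σ is invertible in the monoid P(G) of non-empty subsets of G with operation Σ * Σ' = { στ : σ ∈ Σ, τ ∈ Σ', d(σ) = r(τ) } and identity G₀. -/

import Mathlib

open CategoryTheory

/-- The arrows of a groupoid, bundled with their endpoints. -/
abbrev GArrow (G : Type*) [Groupoid G] := Σ a b : G, a ⟶ b

namespace GArrow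

variable {G : Type*} [Groupoid G]

/-- The unit arrow at an object. -/
def unit (a : G) : GArrow G := ⟨a, a, 𝟙 a⟩

/-- The inverse arrow `σ⁻¹`. -/
def ginv (σ : GArrow G) : GArrow G := ⟨σ.2.1, σ.1, Groupoid.inv σ.2.2⟩

/-- `Composable σ τ` means `d(σ) = r(τ)`, i.e. the product `στ` is defined. -/
def Composable (σ τ : GArrow G) : Prop := σ.1 = τ.2.1

/-- The product `στ` when `d(σ) = r(τ)`. -/
def comp (σ τ : GArrow G) (h : Composable σ τ) : GArrow G :=
  ⟨τ.1, σ.2.1, τ.2.2 ≫ eqToHom h.symm ≫ σ.2.2⟩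

/-- The unit space `G₀`, as a set of arrows. -/
def GUnits (G : Type*) [Groupoid G] : Set (GArrow G) := Set.range unit

/-- The product of two sets of arrows: `Σ * Σ' = { στ : σ ∈ Σ, τ ∈ Σ', d(σ) = r(τ) }`. -/
def setMul (A B : Set (GArrow G)) : Set (GArrow G) :=
  {ρ | ∃ σ ∈ A, ∃ τ ∈ B, ∃ h : Composable σ τ, ρ = comp σ τ h}

end GArrow

/-- An object unital `G`-grading on an associative, not necessarily unital, ring `R`:
`R = ⊕_{σ ∈ G} R_σ`, `R_σ R_τ ⊆ R_{στ}` for composable pairs, `R_σ R_τ = 0` otherwise,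
each `R_e` (`e ∈ G₀`) is unital with identity `u e`, and
`1_{R_{r(σ)}} r = r 1_{R_{d(σ)}} = r` for every `r ∈ R_σ`. -/
structure OUGrading (G : Type*) [Groupoid G] (R : Type*) [NonUnitalRing R] where
  component : GArrow G → AddSubgroup R
  sup_eq_top : (⨆ σ : GArrow G, component σ) = ⊤
  indep : iSupIndep component
  mul_mem : ∀ (σ τ : GArrow G) (h : GArrow.Composable σ τ), ∀ r ∈ component σ,
    ∀ s ∈ component τ, r * s ∈ component (GArrow.comp σ τ h)
  mul_eq_zero : ∀ (σ τ : GArrow G), ¬ GArrow.Composable σ τ → ∀ r ∈ component σ,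
    ∀ s ∈ component τ, r * s = 0
  /-- The identity of the unital ring `R_e`, for each object (unit) `e`. -/
  u : G → R
  u_mem : ∀ a : G, u a ∈ component (GArrow.unit a)
  u_left : ∀ σ : GArrow G, ∀ r ∈ component σ, u σ.2.1 * r = r
  u_right : ∀ σ : GArrow G, ∀ r ∈ component σ, r * u σ.1 = r

/-- The axioms of a left module over a not necessarily unital ring. -/
structure NUModule (R M : Type*) [NonUnitalRing R] [AddCommGroup M] [SMul R M] : Prop where
  smul_add : ∀ (r : R) (m n : M), r • (m + n) = r • m + r • n
  add_smul : ∀ (r s : R) (m : M), (r + s) • m = r • m + s • m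
  mul_smul : ∀ (r s : R) (m : M), (r * s) • m = r • (s • m)

/-- A `G`-graded left module over a ring `R` with object unital `G`-grading `gr`. -/
structure GrModule {G : Type*} [Groupoid G] {R : Type*} [NonUnitalRing R]
    (gr : OUGrading G R) (M : Type*) [AddCommGroup M] [SMul R M] where
  smul_add : ∀ (r : R) (m n : M), r • (m + n) = r • m + r • n
  add_smul : ∀ (r s : R) (m : M), (r + s) • m = r • m + s • m
  mul_smul : ∀ (r s : R) (m : M), (r * s) • m = r • (s • m)
  component : GArrow G → AddSubgroup M
  sup_eq_top : (⨆ σ : GArrow G, component σ) = ⊤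
  indep : iSupIndep component
  smul_mem : ∀ (σ τ : GArrow G) (h : GArrow.Composable σ τ), ∀ r ∈ gr.component σ,
    ∀ m ∈ component τ, r • m ∈ component (GArrow.comp σ τ h)
  smul_eq_zero : ∀ (σ τ : GArrow G), ¬ GArrow.Composable σ τ → ∀ r ∈ gr.component σ,
    ∀ m ∈ component τ, r • m = 0

/-- A graded module is graded unital if `1_{R_{r(σ)}} • m = m` for all homogeneous `m`
of degree `σ`. -/
def GrModule.IsUnital {G : Type*} [Groupoid G] {R : Type*} [NonUnitalRing R]
    {gr : OUGrading G R} {M : Type*} [AddCommGroup M] [SMul R M]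
    (gm : GrModule gr M) : Prop :=
  ∀ σ : GArrow G, ∀ m ∈ gm.component σ, gr.u σ.2.1 • m = m

/-- A graded homomorphism between graded modules with homogeneous components `cM`, `cN`. -/
def IsGrHom {G : Type*} [Groupoid G] {R : Type*} [NonUnitalRing R]
    {M N : Type*} [AddCommGroup M] [AddCommGroup N] [SMul R M] [SMul R N]
    (cM : GArrow G → AddSubgroup M) (cN : GArrow G → AddSubgroup N) (f : M → N) : Prop :=
  (∀ x y : M, f (x + y) = f x + f y) ∧ (∀ (r : R) (x : M), f (r • x) = r • f x) ∧
    (∀ σ : GArrow G, ∀ x ∈ cM σ, f x ∈ cN σ)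

/-- A graded submodule: an additive subgroup closed under the `R`-action which is the
sum of its homogeneous components. -/
def IsGrSubmodule {G : Type*} [Groupoid G] {R : Type*} [NonUnitalRing R]
    {gr : OUGrading G R} {M : Type*} [AddCommGroup M] [SMul R M]
    (gm : GrModule gr M) (N : AddSubgroup M) : Prop :=
  (∀ (r : R), ∀ m ∈ N, r • m ∈ N) ∧ N = ⨆ σ : GArrow G, (N ⊓ gm.component σ)

open Classical in
/-- The homogeneous component of degree `τ` of the `σ'`-suspension `R(σ')`:
`R(σ')_τ = R_{τσ'}` if `(τ, σ')` is composable and `{0}` otherwise. -/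
noncomputable def suspComponent {G : Type*} [Groupoid G] {R : Type*} [NonUnitalRing R]
    (gr : OUGrading G R) (σ' τ : GArrow G) : AddSubgroup R :=
  if h : GArrow.Composable τ σ' then gr.component (GArrow.comp τ σ' h) else ⊥

/-- The `σ'`-suspension `R(σ') = ⊕_τ R(σ')_τ` of `R`, as an additive subgroup of `R`. -/
noncomputable def suspension {G : Type*} [Groupoid G] {R : Type*} [NonUnitalRing R]
    (gr : OUGrading G R) (σ' : GArrow G) : AddSubgroup R :=
  ⨆ τ : GArrow G, suspComponent gr σ' τ

/-- A graded homomorphism from a graded left ideal `S` of `R` (with homogeneous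
components `cS`) to a graded module with components `cN`. -/
def IsGrHomOn {G : Type*} [Groupoid G] {R N : Type*} [NonUnitalRing R]
    [AddCommGroup N] [SMul R N] {S : AddSubgroup R}
    (cS : GArrow G → AddSubgroup R) (cN : GArrow G → AddSubgroup N) (f : ↥S → N) : Prop :=
  (∀ x y : ↥S, f (x + y) = f x + f y) ∧
  (∀ (r : R) (x y : ↥S), (y : R) = r * (x : R) → f y = r • f x) ∧
  (∀ τ : GArrow G, ∀ x : ↥S, (x : R) ∈ cS τ → f x ∈ cN τ)

/-- A graded module is free by suspension if it is the internal direct sum of graded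
submodules, each gradedly isomorphic to a suspension `R(σᵢ)` of `R`. -/
noncomputable def FreeBySuspension {G : Type*} [Groupoid G] {R : Type*} [NonUnitalRing R]
    {gr : OUGrading G R} {M : Type*} [AddCommGroup M] [SMul R M]
    (gm : GrModule gr M) : Prop :=
  ∃ (ι : Type*) (σs : ι → GArrow G) (f : ∀ i : ι, ↥(suspension gr (σs i)) → M),
    (∀ i : ι, IsGrHomOn (suspComponent gr (σs i)) gm.component (f i)) ∧
    (∀ i : ι, Function.Injective (f i)) ∧
    iSupIndep (fun i : ι => AddSubgroup.closure (Set.range (f i))) ∧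
    (⨆ i : ι, AddSubgroup.closure (Set.range (f i))) = ⊤

/-- The set of graded homomorphisms `R → N` of degree `σ`. -/
def HomDeg {G : Type*} [Groupoid G] {R N : Type*} [NonUnitalRing R]
    [AddCommGroup N] [SMul R N] (gr : OUGrading G R)
    (cN : GArrow G → AddSubgroup N) (σ : GArrow G) : Set (R → N) :=
  {f | (∀ x y : R, f (x + y) = f x + f y) ∧ (∀ r x : R, f (r * x) = r • f x) ∧
    (∀ (τ : GArrow G) (h : GArrow.Composable τ σ), ∀ x ∈ gr.component τ,
        f x ∈ cN (GArrow.comp τ σ h)) ∧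
    (∀ τ : GArrow G, ¬ GArrow.Composable τ σ → ∀ x ∈ gr.component τ, f x = 0)}

/-- `HOM_R(R, N) = ⊕_σ HOM_R(R, N)_σ`, the additive group generated by the graded
homomorphisms of some degree. -/
def HOM {G : Type*} [Groupoid G] {R N : Type*} [NonUnitalRing R]
    [AddCommGroup N] [SMul R N] (gr : OUGrading G R)
    (cN : GArrow G → AddSubgroup N) : AddSubgroup (R → N) :=
  AddSubgroup.closure (⋃ σ : GArrow G, HomDeg gr cN σ)

/-- The left `R`-action `(r · f)(x) = f(x r)` on maps `R → N`. -/
def rAct {R N : Type*} [NonUnitalRing R] (r : R) (f : R → N) : R → N :=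
  fun x => f (x * r)

/-- `R · HOM_R(R, N)`, the unitary part of `HOM_R(R, N)` under the action `rAct`. -/
def RHOM {G : Type*} [Groupoid G] {R N : Type*} [NonUnitalRing R]
    [AddCommGroup N] [SMul R N] (gr : OUGrading G R)
    (cN : GArrow G → AddSubgroup N) : AddSubgroup (R → N) :=
  AddSubgroup.closure {g | ∃ (r : R), ∃ f ∈ HOM gr cN, g = rAct r f}

/-- A bundled graded unital left `R`-module. -/
structure GrUMod {G : Type*} [Groupoid G] {R : Type*} [NonUnitalRing R]
    (gr : OUGrading G R) where
  carrier : Type*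
  [acg : AddCommGroup carrier]
  [sm : SMul R carrier]
  str : GrModule gr carrier
  unital : str.IsUnital

attribute [instance] GrUMod.acg GrUMod.sm

open Classical in
/-- The set `Σ_σ`. -/
noncomputable def SigmaSet {G : Type*} [Groupoid G] (σ : GArrow G) : Set (GArrow G) :=
  if σ.1 = σ.2.1 then
    {σ} ∪ (GArrow.GUnits G \ {GArrow.unit σ.1})
  else
    {σ, GArrow.ginv σ} ∪ (GArrow.GUnits G \ {GArrow.unit σ.1, GArrow.unit σ.2.1})

namespace GArrow

variable {G : Type*} [Groupoid G]

lemma ginv_ginv (σ : GArrow G) : ginv (ginv σ) = σ := by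
  obtain ⟨a, b, f⟩ := σ
  simp [ginv]

lemma comp_ginv_self (σ : GArrow G) (h : Composable σ (ginv σ)) :
    comp σ (ginv σ) h = unit σ.2.1 := by
  obtain ⟨a, b, f⟩ := σ
  simp [comp, ginv, unit]

lemma ginv_comp_self (σ : GArrow G) (h : Composable (ginv σ) σ) :
    comp (ginv σ) σ h = unit σ.1 := by
  obtain ⟨a, b, f⟩ := σ
  simp [comp, ginv, unit]
  show f ≫ 𝟙 b ≫ inv f = 𝟙 a
  simp

lemma comp_unit_unit (a b : G) (h : Composable (unit a) (unit b)) :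
    comp (unit a) (unit b) h = unit a := by
  have hab : a = b := h
  subst hab
  simp [comp, unit]

lemma unit_inj {a b : G} (h : unit a = unit b) : a = b := congrArg Sigma.fst h

lemma unit_mem_units (a : G) : unit a ∈ GUnits G := ⟨a, rfl⟩

end GArrow

open GArrow in
lemma sigmaSet_key {G : Type*} [Groupoid G] (σ : GArrow G) :
    GArrow.setMul (SigmaSet σ) (SigmaSet (GArrow.ginv σ)) = GArrow.GUnits G := by
  ext ρ
  constructor
  · rintro ⟨s, hs, t, ht, h, rfl⟩
    by_cases hl : σ.1 = σ.2.1
    · rw [SigmaSet, if_pos hl] at hs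
      rw [SigmaSet, if_pos (show (ginv σ).1 = (ginv σ).2.1 from hl.symm)] at ht
      rcases hs with hs | ⟨⟨e, rfl⟩, hse⟩
      · obtain rfl : σ = s := hs.symm
        rcases ht with ht | ⟨⟨f, rfl⟩, htf⟩
        · obtain rfl : ginv σ = t := ht.symm
          rw [comp_ginv_self]
          exact unit_mem_units _
        · exfalso
          have hf : σ.1 = f := h
          exact htf (show unit f = unit σ.2.1 by rw [← hf]; exact congrArg unit hl)
      · rcases ht with ht | ⟨⟨f, rfl⟩, htf⟩
        · obtain rfl : ginv σ = t := ht.symm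
          exfalso
          have hes : e = σ.1 := h
          exact hse (show unit e = unit σ.1 by rw [hes])
        · rw [comp_unit_unit]
          exact unit_mem_units _
    · rw [SigmaSet, if_neg hl] at hs
      rw [SigmaSet, if_neg (show ¬ (ginv σ).1 = (ginv σ).2.1 from fun hh => hl hh.symm),
        ginv_ginv] at ht
      rcases hs with (hs | hs) | ⟨⟨e, rfl⟩, hse⟩
      · obtain rfl : σ = s := hs.symm
        rcases ht with (ht | ht) | ⟨⟨f, rfl⟩, htf⟩
        · obtain rfl : ginv σ = t := ht.symm
          rw [comp_ginv_self]
          exact unit_mem_units _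
        · obtain rfl : σ = t := ht.symm
          exact absurd h hl
        · exfalso
          have hf : σ.1 = f := h
          exact htf (Or.inr (show unit f = unit σ.1 by rw [← hf]))
      · obtain rfl : ginv σ = s := hs.symm
        rcases ht with (ht | ht) | ⟨⟨f, rfl⟩, htf⟩
        · obtain rfl : ginv σ = t := ht.symm
          exact absurd (show σ.2.1 = σ.1 from h) (fun hh => hl hh.symm)
        · obtain rfl : σ = t := ht.symm
          rw [ginv_comp_self]
          exact unit_mem_units _
        · exfalso
          have hf : σ.2.1 = f := h
          exact htf (Or.inl (show unit f = unit σ.2.1 by rw [← hf]))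
      · rcases ht with (ht | ht) | ⟨⟨f, rfl⟩, htf⟩
        · obtain rfl : ginv σ = t := ht.symm
          exfalso
          have hes : e = σ.1 := h
          exact hse (Or.inl (show unit e = unit σ.1 by rw [hes]))
        · obtain rfl : σ = t := ht.symm
          exfalso
          have hes : e = σ.2.1 := h
          exact hse (Or.inr (show unit e = unit σ.2.1 by rw [hes]))
        · rw [comp_unit_unit]
          exact unit_mem_units _
  · rintro ⟨e, rfl⟩
    by_cases hl : σ.1 = σ.2.1
    · by_cases he : e = σ.1
      · refine ⟨σ, ?_, ginv σ, ?_, rfl, ?_⟩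
        · rw [SigmaSet, if_pos hl]; exact Or.inl rfl
        · rw [SigmaSet, if_pos (show (ginv σ).1 = (ginv σ).2.1 from hl.symm)]
          exact Or.inl rfl
        · exact ((comp_ginv_self σ _).trans (congrArg unit (hl.symm.trans he.symm))).symm
      · refine ⟨unit e, ?_, unit e, ?_, rfl, ?_⟩
        · rw [SigmaSet, if_pos hl]
          exact Or.inr ⟨unit_mem_units e, fun hh => he (unit_inj hh)⟩
        · rw [SigmaSet, if_pos (show (ginv σ).1 = (ginv σ).2.1 from hl.symm)]
          exact Or.inr ⟨unit_mem_units e,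
            fun hh => he (by rw [unit_inj hh]; exact hl.symm)⟩
        · exact (comp_unit_unit e e _).symm
    · rcases eq_or_ne e σ.2.1 with he | he
      · refine ⟨σ, ?_, ginv σ, ?_, rfl, ?_⟩
        · rw [SigmaSet, if_neg hl]; exact Or.inl (Or.inl rfl)
        · rw [SigmaSet, if_neg (show ¬ (ginv σ).1 = (ginv σ).2.1 from fun hh => hl hh.symm)]
          exact Or.inl (Or.inl rfl)
        · exact ((comp_ginv_self σ _).trans (congrArg unit he.symm)).symm
      · rcases eq_or_ne e σ.1 with he2 | he2
        · refine ⟨ginv σ, ?_, σ, ?_, rfl, ?_⟩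
          · rw [SigmaSet, if_neg hl]; exact Or.inl (Or.inr rfl)
          · rw [SigmaSet, if_neg (show ¬ (ginv σ).1 = (ginv σ).2.1 from fun hh => hl hh.symm),
              ginv_ginv]
            exact Or.inl (Or.inr rfl)
          · exact ((ginv_comp_self σ _).trans (congrArg unit he2.symm)).symm
        · refine ⟨unit e, ?_, unit e, ?_, rfl, ?_⟩
          · rw [SigmaSet, if_neg hl]
            refine Or.inr ⟨unit_mem_units e, ?_⟩
            rintro (hh | hh)
            · exact he2 (unit_inj hh)
            · exact he (unit_inj hh)
          · rw [SigmaSet, if_neg (show ¬ (ginv σ).1 = (ginv σ).2.1 from fun hh => hl hh.symm)]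
            refine Or.inr ⟨unit_mem_units e, ?_⟩
            rintro (hh | hh)
            · exact he (unit_inj hh)
            · exact he2 (unit_inj hh)
          · exact (comp_unit_unit e e _).symm

/-- `Σ_σ` is invertible in the monoid `P(G)`. -/
theorem stmt2 {G : Type*} [Groupoid G] (σ : GArrow G) :
    ∃ B : Set (GArrow G), GArrow.setMul (SigmaSet σ) B = GArrow.GUnits G ∧
      GArrow.setMul B (SigmaSet σ) = GArrow.GUnits G := by
  refine ⟨SigmaSet (GArrow.ginv σ), sigmaSet_key σ, ?_⟩
  have := sigmaSet_key (GArrow.ginv σ)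
  rwa [GArrow.ginv_ginv] at this
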